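/- Let (x,y,z) ∈ 𝓗 with x, z ≥ 0, 0 ≤ y ≤ x, x ≥ √z, and xy ≥ z. Then ℓ_X(x,y,z) = x + y. -/

import Mathlib

open scoped commutatorElement

/-- The two generators `a, b` of the discrete Heisenberg group. -/
inductive HGen : Type
  | a | b
deriving DecidableEq

/-- Relators of the discrete Heisenberg group `⟨a,b ∣ [a,[a,b]] = [b,[a,b]] = 1⟩`. -/
def Hrels : Set (FreeGroup HGen) :=
  { ⁅FreeGroup.of HGen.a, ⁅FreeGroup.of HGen.a, FreeGroup.of HGen.b⁆⁆,
    ⁅FreeGroup.of HGen.b, ⁅FreeGroup.of HGen.a, FreeGroup.of HGen.b⁆⁆ }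

/-- The discrete Heisenberg group `𝓗`. -/
abbrev Heis : Type := PresentedGroup Hrels

/-- The generator `a` of `𝓗`. -/
def Ha : Heis := PresentedGroup.of HGen.a

/-- The generator `b` of `𝓗`. -/
def Hb : Heis := PresentedGroup.of HGen.b

/-- The four letters of the alphabet `X = {a, a⁻¹, b, b⁻¹}`. -/
inductive XLetter : Type
  | a | A | b | B
deriving DecidableEq

/-- The element of `𝓗` represented by a letter of `X`. -/
def XLetter.toH : XLetter → Heis
  | .a => Ha
  | .A => Ha⁻¹
  | .b => Hb
  | .B => Hb⁻¹

/-- The element of `𝓗` represented by a word over `X`. -/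
def evalX (w : List XLetter) : Heis := (w.map XLetter.toH).prod

/-- The word `a^k` over `X`, for `k ∈ ℤ`. -/
def apow (k : ℤ) : List XLetter :=
  if 0 ≤ k then List.replicate k.toNat XLetter.a else List.replicate (-k).toNat XLetter.A

/-- The word `b^k` over `X`, for `k ∈ ℤ`. -/
def bpow (k : ℤ) : List XLetter :=
  if 0 ≤ k then List.replicate k.toNat XLetter.b else List.replicate (-k).toNat XLetter.B

/-- The element `(x,y,z)` of `𝓗`, i.e. the element with normal form `[a,b]^z b^y a^x`. -/
def hElt (x y z : ℤ) : Heis := ⁅Ha, Hb⁆ ^ z * Hb ^ y * Ha ^ x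

/-- The word length `ℓ_X(g)` of `g ∈ 𝓗` with respect to `X`. -/
noncomputable def lenX (g : Heis) : ℕ :=
  sInf { n | ∃ w : List XLetter, evalX w = g ∧ w.length = n }

/-- A word over `X` is geodesic if its length equals the word length of the
element it represents. -/
def IsGeodesicX (w : List XLetter) : Prop := w.length = lenX (evalX w)

lemma rel_one {r : FreeGroup HGen} (hr : r ∈ Hrels) : PresentedGroup.mk Hrels r = 1 := by
  exact (QuotientGroup.eq_one_iff r).mpr (Subgroup.subset_normalClosure hr)

lemma comm_a : Commute ⁅Ha, Hb⁆ Ha := by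
  have h : ⁅Ha, ⁅Ha, Hb⁆⁆ = 1 := by
    have := rel_one (r := ⁅FreeGroup.of HGen.a, ⁅FreeGroup.of HGen.a, FreeGroup.of HGen.b⁆⁆)
      (Set.mem_insert _ _)
    simpa [map_commutatorElement, Ha, Hb, PresentedGroup.of] using this
  exact (commutatorElement_eq_one_iff_commute.mp h).symm

lemma comm_b : Commute ⁅Ha, Hb⁆ Hb := by
  have h : ⁅Hb, ⁅Ha, Hb⁆⁆ = 1 := by
    have := rel_one (r := ⁅FreeGroup.of HGen.b, ⁅FreeGroup.of HGen.a, FreeGroup.of HGen.b⁆⁆)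
      (Set.mem_insert_of_mem _ rfl)
    simpa [map_commutatorElement, Ha, Hb, PresentedGroup.of] using this
  exact (commutatorElement_eq_one_iff_commute.mp h).symm

section Helper
variable {G : Type*} [Group G] (a b c : G)

lemma helper_ab (hc : a * b = c * b * a) (hca : Commute c a) (n : ℕ) :
    a ^ n * b = c ^ n * b * a ^ n := by
  induction n with
  | zero => simp
  | succ n ih =>
    calc a ^ (n+1) * b = a ^ n * (a * b) := by rw [pow_succ]; group
    _ = a ^ n * c * b * a := by rw [hc]; group
    _ = c * (a ^ n * b) * a := by rw [(hca.symm.pow_left n).eq]; group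
    _ = c * (c ^ n * b * a ^ n) * a := by rw [ih]
    _ = c ^ (n+1) * b * a ^ (n+1) := by group

lemma helper_abk (hc : a * b = c * b * a) (hca : Commute c a) (hcb : Commute c b) (m k : ℕ) :
    a ^ m * b ^ k = c ^ (m * k) * b ^ k * a ^ m := by
  induction k with
  | zero => simp
  | succ n ih =>
    calc a ^ m * b ^ (n+1) = (a ^ m * b ^ n) * b := by rw [pow_succ, mul_assoc]
    _ = c ^ (m * n) * b ^ n * (a ^ m * b) := by rw [ih]; group
    _ = c ^ (m * n) * b ^ n * (c ^ m * b * a ^ m) := by rw [helper_ab a b c hc hca]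
    _ = c ^ (m * n) * (b ^ n * c ^ m) * b * a ^ m := by group
    _ = c ^ (m * n) * (c ^ m * b ^ n) * b * a ^ m := by rw [((hcb.pow_left m).pow_right n).symm.eq]
    _ = c ^ (m * (n+1)) * b ^ (n+1) * a ^ m := by rw [mul_add, mul_one, pow_add]; group

lemma helper_word (hc : a * b = c * b * a) (hca : Commute c a) (hcb : Commute c b)
    (p r q s : ℕ) :
    b ^ p * a ^ r * b * a ^ s * b ^ q
      = c ^ (r * (q + 1) + s * q) * b ^ (p + (q + 1)) * a ^ (r + s) := by
  have h1 : a ^ s * b ^ q = c ^ (s * q) * b ^ q * a ^ s := helper_abk a b c hc hca hcb s q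
  have h2 : a ^ r * b ^ (q + 1) = c ^ (r * (q + 1)) * b ^ (q + 1) * a ^ r :=
    helper_abk a b c hc hca hcb r (q + 1)
  have hbc : b * c ^ (s * q) = c ^ (s * q) * b := ((hcb.pow_left (s * q)).symm.eq)
  have hac : a ^ r * c ^ (s * q) = c ^ (s * q) * a ^ r :=
    (((hca.pow_left (s * q)).pow_right r).symm.eq)
  have hbcp : b ^ p * c ^ (s * q + r * (q + 1)) = c ^ (s * q + r * (q + 1)) * b ^ p :=
    (((hcb.pow_left _).pow_right p).symm.eq)
  calc b ^ p * a ^ r * b * a ^ s * b ^ q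
      = b ^ p * (a ^ r * (b * (a ^ s * b ^ q))) := by group
    _ = b ^ p * (a ^ r * (b * (c ^ (s * q) * b ^ q * a ^ s))) := by rw [h1]
    _ = b ^ p * (a ^ r * ((b * c ^ (s * q)) * (b ^ q * a ^ s))) := by group
    _ = b ^ p * (a ^ r * ((c ^ (s * q) * b) * (b ^ q * a ^ s))) := by rw [hbc]
    _ = b ^ p * ((a ^ r * c ^ (s * q)) * (b ^ (q + 1) * a ^ s)) := by group
    _ = b ^ p * ((c ^ (s * q) * a ^ r) * (b ^ (q + 1) * a ^ s)) := by rw [hac]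
    _ = b ^ p * (c ^ (s * q) * ((a ^ r * b ^ (q + 1)) * a ^ s)) := by group
    _ = b ^ p * (c ^ (s * q) * (c ^ (r * (q + 1)) * b ^ (q + 1) * a ^ r * a ^ s)) := by
        rw [h2]
    _ = (b ^ p * c ^ (s * q + r * (q + 1))) * (b ^ (q + 1) * a ^ (r + s)) := by
        rw [pow_add c, pow_add a]; group
    _ = (c ^ (s * q + r * (q + 1)) * b ^ p) * (b ^ (q + 1) * a ^ (r + s)) := by rw [hbcp]
    _ = c ^ (r * (q + 1) + s * q) * b ^ (p + (q + 1)) * a ^ (r + s) := by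
        rw [add_comm (s * q), pow_add b p]; group

end Helper

lemma ab_eq : Ha * Hb = ⁅Ha, Hb⁆ * Hb * Ha := by
  rw [commutatorElement_def]; group

lemma apow_mul_bpow (m k : ℕ) : Ha ^ m * Hb ^ k = ⁅Ha, Hb⁆ ^ (m * k) * Hb ^ k * Ha ^ m :=
  helper_abk Ha Hb _ ab_eq comm_a comm_b m k

lemma evalX_append (w₁ w₂ : List XLetter) : evalX (w₁ ++ w₂) = evalX w₁ * evalX w₂ := by
  simp [evalX]

lemma evalX_replicate (n : ℕ) (l : XLetter) :
    evalX (List.replicate n l) = l.toH ^ n := by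
  simp [evalX, List.map_replicate, List.prod_replicate]

lemma evalX_singleton (l : XLetter) : evalX [l] = l.toH := by simp [evalX]

/-- The homomorphism `𝓗 → ℤ` determined by values on the generators. -/
def homX (va vb : Multiplicative ℤ) : Heis →* Multiplicative ℤ :=
  PresentedGroup.toGroup (f := fun g => match g with | HGen.a => va | HGen.b => vb)
    (by
      intro r hr
      rcases hr with h | h <;> subst h <;>
        simp [map_commutatorElement, commutatorElement_def, mul_comm])

noncomputable def φa : Heis →* Multiplicative ℤ := homX (Multiplicative.ofAdd 1) 1
noncomputable def φb : Heis →* Multiplicative ℤ := homX 1 (Multiplicative.ofAdd 1)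

lemma homX_Ha (va vb : Multiplicative ℤ) : homX va vb Ha = va := PresentedGroup.toGroup.of _
lemma homX_Hb (va vb : Multiplicative ℤ) : homX va vb Hb = vb := PresentedGroup.toGroup.of _

lemma letter_bound (l : XLetter) :
    |(φa l.toH).toAdd| + |(φb l.toH).toAdd| = 1 := by
  cases l <;>
    simp [XLetter.toH, φa, φb, homX_Ha, homX_Hb, map_inv]

lemma word_bound (w : List XLetter) :
    |(φa (evalX w)).toAdd| + |(φb (evalX w)).toAdd| ≤ (w.length : ℤ) := by
  induction w with
  | nil => simp [evalX]
  | cons l t ih =>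
    have he : evalX (l :: t) = l.toH * evalX t := by simp [evalX]
    have ha : (φa (evalX (l :: t))).toAdd = (φa l.toH).toAdd + (φa (evalX t)).toAdd := by
      rw [he, map_mul]; rfl
    have hb : (φb (evalX (l :: t))).toAdd = (φb l.toH).toAdd + (φb (evalX t)).toAdd := by
      rw [he, map_mul]; rfl
    have h1 := letter_bound l
    calc |(φa (evalX (l :: t))).toAdd| + |(φb (evalX (l :: t))).toAdd|
        ≤ (|(φa l.toH).toAdd| + |(φa (evalX t)).toAdd|)
          + (|(φb l.toH).toAdd| + |(φb (evalX t)).toAdd|) := by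
          rw [ha, hb]; gcongr <;> exact abs_add_le _ _
      _ ≤ 1 + (t.length : ℤ) := by
          rw [show (|(φa l.toH).toAdd| + |(φa (evalX t)).toAdd|)
            + (|(φb l.toH).toAdd| + |(φb (evalX t)).toAdd|)
            = (|(φa l.toH).toAdd| + |(φb l.toH).toAdd|)
            + (|(φa (evalX t)).toAdd| + |(φb (evalX t)).toAdd|) by ring, h1]
          linarith
      _ = ((l :: t).length : ℤ) := by simp [add_comm]

lemma φa_hElt (x y z : ℤ) : (φa (hElt x y z)).toAdd = x := by
  have : φa (hElt x y z) = Multiplicative.ofAdd x := by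
    simp only [hElt, map_mul, map_zpow, map_commutatorElement, φa, homX_Ha, homX_Hb]
    rw [commutatorElement_eq_one_iff_commute.mpr (Commute.all (_ : Multiplicative ℤ) _)]
    simp [← ofAdd_zsmul]
  rw [this]; rfl

lemma φb_hElt (x y z : ℤ) : (φb (hElt x y z)).toAdd = y := by
  have : φb (hElt x y z) = Multiplicative.ofAdd y := by
    simp only [hElt, map_mul, map_zpow, map_commutatorElement, φb, homX_Ha, homX_Hb]
    rw [commutatorElement_eq_one_iff_commute.mpr (Commute.all (_ : Multiplicative ℤ) _)]
    simp [← ofAdd_zsmul]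
  rw [this]; rfl

lemma heis_word (p r q s : ℕ) :
    Hb ^ p * Ha ^ r * Hb * Ha ^ s * Hb ^ q
      = ⁅Ha, Hb⁆ ^ (r * (q + 1) + s * q) * Hb ^ (p + (q + 1)) * Ha ^ (r + s) :=
  helper_word Ha Hb _ ab_eq comm_a comm_b p r q s

lemma hElt_natCast (X Y Z : ℕ) :
    hElt X Y Z = ⁅Ha, Hb⁆ ^ Z * Hb ^ Y * Ha ^ X := by
  simp [hElt, zpow_natCast]

lemma exists_word (X Y Z : ℕ) (hYX : Y ≤ X) (hZ : Z ≤ X * Y) :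
    ∃ w : List XLetter, evalX w = hElt X Y Z ∧ w.length = X + Y := by
  rcases Nat.eq_zero_or_pos Y with hY | hY
  · subst hY
    have hZ0 : Z = 0 := by omega
    subst hZ0
    refine ⟨List.replicate X XLetter.a, ?_, by simp⟩
    rw [evalX_replicate, hElt_natCast]
    simp [XLetter.toH]
  · have hX : 0 < X := lt_of_lt_of_le hY hYX
    set q := Z / X with hq
    set r := Z % X with hrdef
    have hr : r < X := Nat.mod_lt _ hX
    have hdm : X * q + r = Z := Nat.div_add_mod Z X
    have hqY : q ≤ Y := by
      have h1 : Z / X ≤ (X * Y) / X := Nat.div_le_div_right hZ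
      rwa [Nat.mul_div_cancel_left Y hX] at h1
    rcases eq_or_lt_of_le hqY with hqeq | hqlt
    · -- q = Y, so Z = X * Y
      have hZeq : Z = X * Y := by
        rw [hqeq] at hdm
        omega
      refine ⟨List.replicate X XLetter.a ++ List.replicate Y XLetter.b, ?_, by simp⟩
      rw [evalX_append, evalX_replicate, evalX_replicate, hElt_natCast]
      show Ha ^ X * Hb ^ Y = _
      rw [apow_mul_bpow, hZeq]
    · -- q < Y
      refine ⟨List.replicate (Y - (q + 1)) XLetter.b ++ List.replicate r XLetter.a
        ++ [XLetter.b] ++ List.replicate (X - r) XLetter.a ++ List.replicate q XLetter.b,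
        ?_, by simp; omega⟩
      rw [evalX_append, evalX_append, evalX_append, evalX_append, evalX_replicate,
        evalX_replicate, evalX_replicate, evalX_replicate, evalX_singleton]
      show Hb ^ (Y - (q+1)) * Ha ^ r * Hb * Ha ^ (X - r) * Hb ^ q = _
      rw [heis_word, hElt_natCast]
      have e1 : r * (q + 1) + (X - r) * q = Z := by
        obtain ⟨d, hd⟩ := Nat.exists_eq_add_of_le hr.le
        rw [hd] at hdm ⊢
        have h5 : r + d - r = d := by omega
        rw [h5]
        calc r * (q + 1) + d * q = (r + d) * q + r := by ring
          _ = Z := hdm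
      have e2 : Y - (q + 1) + (q + 1) = Y := by omega
      have e3 : r + (X - r) = X := by omega
      rw [e1, e2, e3]


/-- If `x, z ≥ 0`, `0 ≤ y ≤ x`, `x ≥ √z` and `xy ≥ z`, then
`ℓ_X(x,y,z) = x + y`. -/
theorem lenX_case_I21 (x y z : ℤ) (hx : 0 ≤ x) (hz : 0 ≤ z) (hy0 : 0 ≤ y) (hyx : y ≤ x)
    (hsqrt : Real.sqrt z ≤ (x : ℝ)) (hxy : z ≤ x * y) :
    (lenX (hElt x y z) : ℤ) = x + y := by
  set X := x.toNat with hX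
  set Y := y.toNat with hY
  set Z := z.toNat with hZ
  have hxX : (X : ℤ) = x := Int.toNat_of_nonneg hx
  have hyY : (Y : ℤ) = y := Int.toNat_of_nonneg hy0
  have hzZ : (Z : ℤ) = z := Int.toNat_of_nonneg hz
  have hYX : Y ≤ X := by omega
  have hZXY : Z ≤ X * Y := by
    have : (Z : ℤ) ≤ (X : ℤ) * (Y : ℤ) := by rw [hxX, hyY, hzZ]; exact hxy
    exact_mod_cast this
  obtain ⟨w, hw, hlen⟩ := exists_word X Y Z hYX hZXY
  rw [hxX, hyY, hzZ] at hw
  have hS : (X + Y) ∈ { n | ∃ w : List XLetter, evalX w = hElt x y z ∧ w.length = n } :=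
    ⟨w, hw, hlen⟩
  have hub : lenX (hElt x y z) ≤ X + Y := Nat.sInf_le hS
  have hlb : X + Y ≤ lenX (hElt x y z) := by
    apply le_csInf ⟨X + Y, hS⟩
    rintro n ⟨w', hw', hl'⟩
    have hb := word_bound w'
    rw [hw', φa_hElt, φb_hElt] at hb
    rw [abs_of_nonneg hx, abs_of_nonneg hy0, hl'] at hb
    have : (X : ℤ) + (Y : ℤ) ≤ (n : ℤ) := by rw [hxX, hyY]; exact hb
    exact_mod_cast this
  have : lenX (hElt x y z) = X + Y := le_antisymm hub hlb
  rw [this]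
  push_cast
  rw [hxX, hyY]
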